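/- arXiv:1403.5750 — 2 statements merged into one kernel-verified Lean document; each statement's English description precedes it below -/
import Mathlib

section
/- Let X ∈ ℝ^{r×(t+1)} have full column rank (i.e., rank X = t+1 ≤ r). Then a matrix A ∈ ℝ^{r×(t+1)} satisfies A·Xᵀ = X·Aᵀ if and only if A = X·E for some symmetric matrix E ∈ ℝ^{(t+1)×(t+1)}. -/
open Matrix

lemma isUnit_of_rank_eq_card {n : ℕ} (B : Matrix (Fin n) (Fin n) ℝ)
    (h : B.rank = n) : IsUnit B := by
  rw [← Matrix.mulVec_surjective_iff_isUnit, ← Matrix.coe_mulVecLin,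
    ← LinearMap.range_eq_top]
  apply Submodule.eq_top_of_finrank_eq
  rw [Matrix.rank] at h
  simpa [h] using h

theorem stmt_2 (r t : ℕ) (htr : t + 1 ≤ r)
    (X : Matrix (Fin r) (Fin (t + 1)) ℝ) (hX : X.rank = t + 1)
    (A : Matrix (Fin r) (Fin (t + 1)) ℝ) :
    A * Xᵀ = X * Aᵀ ↔ ∃ E : Matrix (Fin (t + 1)) (Fin (t + 1)) ℝ, E.IsSymm ∧ A = X * E := by
  set B := Xᵀ * X with hB
  have hBrank : B.rank = t + 1 := by
    rw [hB, Matrix.rank_transpose_mul_self, hX]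
  have hBunit : IsUnit B := isUnit_of_rank_eq_card B hBrank
  have hBdet : IsUnit B.det := (Matrix.isUnit_iff_isUnit_det B).mp hBunit
  have hBinv : B * B⁻¹ = 1 := Matrix.mul_nonsing_inv B hBdet
  have hBinv' : B⁻¹ * B = 1 := Matrix.nonsing_inv_mul B hBdet
  constructor
  · intro hA
    refine ⟨Aᵀ * X * B⁻¹, ?_, ?_⟩
    · -- symmetry
      have key : Xᵀ * A * B = B * (Aᵀ * X) := by
        calc Xᵀ * A * B = Xᵀ * (A * Xᵀ) * X := by rw [hB]; rw [Matrix.mul_assoc, Matrix.mul_assoc, Matrix.mul_assoc]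
        _ = Xᵀ * (X * Aᵀ) * X := by rw [hA]
        _ = B * (Aᵀ * X) := by rw [hB, Matrix.mul_assoc, Matrix.mul_assoc, Matrix.mul_assoc]
      have hBsymm : Bᵀ = B := by rw [hB, Matrix.transpose_mul, Matrix.transpose_transpose]
      have hBinvsymm : (B⁻¹)ᵀ = B⁻¹ := by rw [Matrix.transpose_nonsing_inv, hBsymm]
      rw [Matrix.IsSymm]
      rw [Matrix.transpose_mul, Matrix.transpose_mul, Matrix.transpose_transpose,
        hBinvsymm]
      -- goal : B⁻¹ * (Xᵀ * A) = Aᵀ * X * B⁻¹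
      calc B⁻¹ * (Xᵀ * A) = B⁻¹ * (Xᵀ * A * B) * B⁻¹ := by
            simp only [Matrix.mul_assoc, hBinv, Matrix.mul_one]
        _ = B⁻¹ * (B * (Aᵀ * X)) * B⁻¹ := by rw [key]
        _ = Aᵀ * X * B⁻¹ := by rw [← Matrix.mul_assoc B⁻¹ B, hBinv', Matrix.one_mul]
    · -- A = X * (Aᵀ * X * B⁻¹)
      calc A = A * B * B⁻¹ := by rw [Matrix.mul_assoc, hBinv, Matrix.mul_one]
        _ = (A * Xᵀ) * X * B⁻¹ := by rw [hB, ← Matrix.mul_assoc]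
        _ = X * Aᵀ * X * B⁻¹ := by rw [hA]
        _ = X * (Aᵀ * X * B⁻¹) := by rw [Matrix.mul_assoc, Matrix.mul_assoc, Matrix.mul_assoc]
  · rintro ⟨E, hE, rfl⟩
    rw [Matrix.transpose_mul, ← Matrix.mul_assoc, Matrix.mul_assoc X E Xᵀ,
      Matrix.mul_assoc X Eᵀ Xᵀ]
    rw [Matrix.IsSymm] at hE
    rw [hE]
end

section
/- Let 𝓛 : ℝ^{r×r} → ℝ^{r×(t+1)} be defined by 𝓛(B) = ½(B·X − Bᵀ·X), where X ∈ ℝ^{r×(t+1)} has full column rank. For a given matrix M ∈ ℝ^{r×(t+1)}, the equation 𝓛(B) = M has a solution B ∈ ℝ^{r×r} if and only if ⟨M, X·(e_p·e_qᵀ + e_q·e_pᵀ)⟩ = 0 for all 0 ≤ p ≤ q ≤ t, where ⟨U,V⟩ = trace(U·Vᵀ). -/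
open Matrix

lemma tr_std (n : ℕ) (S : Matrix (Fin n) (Fin n) ℝ) (p q : Fin n) :
    Matrix.trace (S * Matrix.single p q (1 : ℝ)) = S q p := by
  rw [Matrix.trace]
  rw [show (∑ i, (S * Matrix.single p q (1:ℝ)).diag i)
      = ∑ i, (S * Matrix.single p q (1:ℝ)) i i from rfl]
  rw [Finset.sum_eq_single q]
  · simp
  · intro b _ hb
    exact Matrix.mul_single_apply_of_ne (c := (1:ℝ)) p q b b hb S
  · simp

lemma tr_aux (r t : ℕ) (X M : Matrix (Fin r) (Fin (t+1)) ℝ) (p q : Fin (t+1)) :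
    Matrix.trace (M * (X * (Matrix.single p q (1 : ℝ) +
        Matrix.single q p (1 : ℝ)))ᵀ) = (Xᵀ * M) p q + (Xᵀ * M) q p := by
  have hT : (Matrix.single p q (1 : ℝ) + Matrix.single q p (1 : ℝ))ᵀ
      = Matrix.single q p (1 : ℝ) + Matrix.single p q (1 : ℝ) := by
    ext i j
    simp [Matrix.single, Matrix.transpose_apply, and_comm]
  rw [transpose_mul, ← Matrix.mul_assoc, Matrix.trace_mul_cycle, hT, mul_add, trace_add,
    tr_std, tr_std]

lemma isUnit_det_aux (r t : ℕ) (X : Matrix (Fin r) (Fin (t+1)) ℝ) (hX : X.rank = t + 1) :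
    IsUnit (Xᵀ * X).det := by
  rw [← Matrix.isUnit_iff_isUnit_det, ← Matrix.mulVec_surjective_iff_isUnit]
  have hrange : LinearMap.range (Xᵀ * X).mulVecLin = ⊤ := by
    apply Submodule.eq_top_of_finrank_eq
    have : Module.finrank ℝ (LinearMap.range (Xᵀ * X).mulVecLin) = (Xᵀ * X).rank := rfl
    rw [this, Matrix.rank_transpose_mul_self, hX, Module.finrank_fintype_fun_eq_card,
      Fintype.card_fin]
  intro v
  obtain ⟨w, hw⟩ := (LinearMap.range_eq_top.mp hrange) v
  exact ⟨w, hw⟩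

lemma swap_aux (r t : ℕ) (X M : Matrix (Fin r) (Fin (t+1)) ℝ) (p q : Fin (t+1)) :
    (Mᵀ * X) p q = (Xᵀ * M) q p := by
  simp [mul_apply, transpose_apply, mul_comm]

theorem stmt_5 (r t : ℕ) (htr : t + 1 ≤ r)
    (X : Matrix (Fin r) (Fin (t + 1)) ℝ) (hX : X.rank = t + 1)
    (M : Matrix (Fin r) (Fin (t + 1)) ℝ) :
    (∃ B : Matrix (Fin r) (Fin r) ℝ, (1 / 2 : ℝ) • (B * X - Bᵀ * X) = M) ↔
    ∀ p q : Fin (t + 1), p ≤ q →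
      Matrix.trace (M * (X * (Matrix.single p q (1 : ℝ) +
        Matrix.single q p (1 : ℝ)))ᵀ) = 0 := by
  constructor
  · rintro ⟨B, rfl⟩ p q _
    rw [tr_aux]
    set M := (1 / 2 : ℝ) • (B * X - Bᵀ * X) with hM
    have key : Xᵀ * M + Mᵀ * X = 0 := by
      rw [hM]
      simp only [transpose_smul, transpose_sub, transpose_mul, transpose_transpose,
        Matrix.mul_smul, Matrix.smul_mul, Matrix.mul_sub, Matrix.sub_mul, Matrix.mul_assoc]
      rw [← smul_add]
      simp only [sub_add_sub_cancel']
      abel_nf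
      simp
    have hk := congrFun (congrFun key p) q
    simp only [Matrix.add_apply, Matrix.zero_apply] at hk
    rw [swap_aux r t X M p q] at hk
    exact hk
  · intro h
    have hdet := isUnit_det_aux r t X hX
    set S := Xᵀ * X with hS
    set G := S⁻¹ with hG
    have hGS : G * S = 1 := Matrix.nonsing_inv_mul S hdet
    have hGT : Gᵀ = G := by
      rw [hG, Matrix.transpose_nonsing_inv]
      congr 1
      rw [hS, transpose_mul, transpose_transpose]
    have hA : Mᵀ * X = -(Xᵀ * M) := by
      have h2 : ∀ p q : Fin (t+1), (Xᵀ * M) p q + (Xᵀ * M) q p = 0 := by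
        intro p q
        rcases le_total p q with hpq | hpq
        · rw [← tr_aux]; exact h p q hpq
        · rw [add_comm, ← tr_aux]; exact h q p hpq
      ext p q
      rw [swap_aux, Matrix.neg_apply]
      have := h2 q p
      linarith
    have hA2 : ∀ (N : Matrix (Fin (t+1)) (Fin r) ℝ),
        Mᵀ * (X * N) = -(Xᵀ * (M * N)) := by
      intro N
      rw [← Matrix.mul_assoc, hA, Matrix.neg_mul, Matrix.mul_assoc]
    refine ⟨M * (G * Xᵀ) - X * (G * Mᵀ) - X * (G * (Xᵀ * M * (G * Xᵀ))), ?_⟩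
    set B := M * (G * Xᵀ) - X * (G * Mᵀ) - X * (G * (Xᵀ * M * (G * Xᵀ))) with hB
    have hBT : Bᵀ = -B := by
      rw [hB]
      simp only [transpose_sub, transpose_mul, transpose_transpose, hGT, Matrix.mul_assoc]
      rw [hA2]
      simp only [Matrix.mul_neg, Matrix.neg_mul]
      abel
    have hBX : B * X = M := by
      rw [hB]
      simp only [Matrix.sub_mul, Matrix.mul_assoc]
      rw [show Xᵀ * X = S from rfl, hGS]
      simp only [Matrix.mul_one]
      rw [hA]
      simp only [Matrix.mul_neg]
      abel
    rw [hBT, Matrix.neg_mul, sub_neg_eq_add, hBX, ← two_smul ℝ M, smul_smul]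
    norm_num
end
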